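/- Let m ≥ 2 and let L(ℓ) = L_{m,m}(ℓ) be the number of sequences of length ℓ over {1,...,m} with no m consecutive strictly decreasing entries. Then L satisfies the linear recurrence L(ℓ) = m·L(ℓ−1) − L(ℓ−m) for all ℓ ≥ m, with initial conditions L(ℓ) = m^ℓ for 0 ≤ ℓ < m. -/

import Mathlib

/-- `l` has a strictly decreasing run of length `k` starting at position `i`. -/
def HasStrictDecRunAt (k : ℕ) (l : List ℕ) (i : ℕ) : Prop :=
  i + k ≤ l.length ∧ ∀ j, j + 1 < k → l.getD (i + j + 1) 0 < l.getD (i + j) 0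

/-- A sequence is `k`-admissible if no `k` consecutive entries are strictly decreasing. -/
def Admissible (k : ℕ) (l : List ℕ) : Prop := ∀ i, ¬ HasStrictDecRunAt k l i

/-- `L m k ℓ` is the number of admissible sequences of length `ℓ` over `{1,…,m}`. -/
noncomputable def L (m k ℓ : ℕ) : ℕ :=
  Nat.card {l : List ℕ // (∀ x ∈ l, 1 ≤ x ∧ x ≤ m) ∧ Admissible k l ∧ l.length = ℓ}

namespace AdmAux

/-- the alphabet -/
def Alpha (m : ℕ) := {x : ℕ // 1 ≤ x ∧ x ≤ m}

def alphaEquiv (m : ℕ) : Alpha m ≃ Fin m where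
  toFun x := ⟨x.1 - 1, by have := x.2; omega⟩
  invFun i := ⟨i.1 + 1, by have := i.2; omega⟩
  left_inv x := Subtype.ext (by have := x.2.1; simp; omega)
  right_inv i := by ext; simp

instance alphaFinite (m : ℕ) : Finite (Alpha m) := Finite.of_equiv _ (alphaEquiv m).symm

lemma card_alpha (m : ℕ) : Nat.card (Alpha m) = m := by
  rw [Nat.card_congr (alphaEquiv m)]; simp

lemma run_of_prefix {k i : ℕ} {l' l : List ℕ} (h : l' <+: l)
    (hr : HasStrictDecRunAt k l' i) : HasStrictDecRunAt k l i := by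
  obtain ⟨hle, hd⟩ := hr
  refine ⟨hle.trans h.length_le, fun j hj => ?_⟩
  have h1 : i + j + 1 < l'.length := by omega
  have h2 : i + j < l'.length := by omega
  rw [List.getD_eq_getElem _ 0 (h1.trans_le h.length_le),
    List.getD_eq_getElem _ 0 (h2.trans_le h.length_le), ← h.getElem h1, ← h.getElem h2,
    ← List.getD_eq_getElem l' 0 h1, ← List.getD_eq_getElem l' 0 h2]
  exact hd j hj

lemma run_to_prefix {k i : ℕ} {l' l : List ℕ} (h : l' <+: l) (hlen : i + k ≤ l'.length)
    (hr : HasStrictDecRunAt k l i) : HasStrictDecRunAt k l' i := by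
  obtain ⟨_, hd⟩ := hr
  refine ⟨hlen, fun j hj => ?_⟩
  have h1 : i + j + 1 < l'.length := by omega
  have h2 : i + j < l'.length := by omega
  rw [List.getD_eq_getElem _ 0 h1, List.getD_eq_getElem _ 0 h2, h.getElem h1, h.getElem h2,
    ← List.getD_eq_getElem l 0 (h1.trans_le h.length_le),
    ← List.getD_eq_getElem l 0 (h2.trans_le h.length_le)]
  exact hd j hj

lemma admissible_of_prefix {k : ℕ} {l' l : List ℕ} (h : l' <+: l) (ha : Admissible k l) :
    Admissible k l' := fun i hr => ha i (run_of_prefix h hr)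

/-- the generic list-counting equivalence -/
def listEquiv (m n : ℕ) :
    {l : List ℕ // (∀ x ∈ l, 1 ≤ x ∧ x ≤ m) ∧ l.length = n} ≃ (Fin n → Alpha m) where
  toFun l i := ⟨l.val.getD i 0, by
    have hi : (i : ℕ) < l.val.length := by rw [l.2.2]; exact i.2
    rw [List.getD_eq_getElem _ 0 hi]
    exact l.2.1 _ (List.getElem_mem hi)⟩
  invFun f := ⟨List.ofFn (fun i => (f i).val), by
    constructor
    · intro x hx
      rw [List.mem_ofFn] at hx
      obtain ⟨i, rfl⟩ := hx
      exact (f i).2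
    · exact List.length_ofFn⟩
  left_inv l := by
    apply Subtype.ext
    apply List.ext_getElem (by simp [l.2.2])
    intro i h1 h2
    have hi : i < l.val.length := by rw [l.2.2]; simpa using h1
    simp only [List.getElem_ofFn]
    exact List.getD_eq_getElem _ 0 hi
  right_inv f := by
    funext i
    apply Subtype.ext
    have hi : (i : ℕ) < (List.ofFn (fun i => (f i).val)).length := by simp [i.2]
    simp [List.getD_eq_getElem _ 0 hi, List.getElem_ofFn]

lemma finite_sub (m n : ℕ) (R : List ℕ → Prop) :
    Finite {l : List ℕ // (∀ x ∈ l, 1 ≤ x ∧ x ≤ m) ∧ R l ∧ l.length = n} := by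
  apply Finite.of_injective
    (fun l : {l : List ℕ // (∀ x ∈ l, 1 ≤ x ∧ x ≤ m) ∧ R l ∧ l.length = n} =>
      (fun i : Fin n => (⟨l.val.getD i 0, by
        have hi : (i : ℕ) < l.val.length := by rw [l.2.2.2]; exact i.2
        rw [List.getD_eq_getElem _ 0 hi]
        have := l.2.1 _ (List.getElem_mem hi); omega⟩ : Fin (m + 1))))
  intro a b hab
  apply Subtype.ext
  apply List.ext_getElem (by rw [a.2.2.2, b.2.2.2])
  intro i h1 h2
  have hi : i < n := by rw [← a.2.2.2]; exact h1
  have h3 : a.val.getD i 0 = b.val.getD i 0 := congrArg Fin.val (congrFun hab ⟨i, hi⟩)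
  rwa [List.getD_eq_getElem _ 0 h1, List.getD_eq_getElem _ 0 h2] at h3

/-- the strictly decreasing word `[m, m-1, …, 1]` -/
def D (m : ℕ) : List ℕ := List.ofFn (fun i : Fin m => m - i)

lemma length_D (m : ℕ) : (D m).length = m := List.length_ofFn

lemma getElem_D (m : ℕ) {j : ℕ} (hj : j < (D m).length) : (D m)[j] = m - j := by
  simp [D, List.getElem_ofFn]

lemma mem_D (m : ℕ) {x : ℕ} (hx : x ∈ D m) : 1 ≤ x ∧ x ≤ m := by
  rw [D, List.mem_ofFn] at hx
  obtain ⟨i, rfl⟩ := hx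
  show 1 ≤ m - (i : ℕ) ∧ m - (i : ℕ) ≤ m
  have := i.isLt
  omega

lemma bad_eq {m ℓ : ℕ} (hm : 2 ≤ m) (hℓ : m ≤ ℓ) {l : List ℕ}
    (hP : ∀ x ∈ l, 1 ≤ x ∧ x ≤ m) (hA' : Admissible m l.dropLast) (hA : ¬ Admissible m l)
    (hlen : l.length = ℓ) : l.take (ℓ - m) ++ D m = l := by
  obtain ⟨i, hi⟩ : ∃ i, HasStrictDecRunAt m l i := by
    simpa [Admissible, not_forall] using hA
  obtain ⟨hle, hd⟩ := hi
  have hile : i + m ≤ ℓ := by rw [hlen] at hle; exact hle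
  have hieq : i = ℓ - m := by
    by_contra h
    have h2 : i + m ≤ l.dropLast.length := by rw [List.length_dropLast, hlen]; omega
    exact hA' i (run_to_prefix (List.dropLast_prefix l) h2 ⟨hle, hd⟩)
  have chain : ∀ d j, j + d < m → l.getD (i + j + d) 0 + d ≤ l.getD (i + j) 0 := by
    intro d
    induction d with
    | zero => intro j _; simp
    | succ d ih =>
      intro j hj
      have h1 := hd (j + d) (by omega)
      have h2 := ih j (by omega)
      have e1 : i + (j + d) + 1 = i + j + (d + 1) := by omega
      have e2 : i + (j + d) = i + j + d := by omega
      rw [e1, e2] at h1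
      omega
  have hbound : ∀ t, t < ℓ → 1 ≤ l.getD t 0 ∧ l.getD t 0 ≤ m := by
    intro t ht
    have ht' : t < l.length := by omega
    rw [List.getD_eq_getElem _ 0 ht']
    exact hP _ (List.getElem_mem ht')
  have hval : ∀ j, j < m → l.getD (i + j) 0 = m - j := by
    intro j hj
    have c1 := chain (m - 1 - j) j (by omega)
    have c2 := chain j 0 (by omega)
    have e1 : i + j + (m - 1 - j) = i + (m - 1) := by omega
    have e2 : i + 0 + j = i + j := by omega
    have e3 : i + 0 = i := by omega
    rw [e1] at c1; rw [e2, e3] at c2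
    have b1 := hbound (i + (m - 1)) (by omega)
    have b2 := hbound i (by omega)
    have b3 := hbound (i + j) (by omega)
    omega
  have hdrop : l.drop (ℓ - m) = D m := by
    apply List.ext_getElem (by rw [List.length_drop, hlen, length_D]; omega)
    intro j h1 h2
    have hj : j < m := by rw [length_D] at h2; exact h2
    rw [List.getElem_drop, getElem_D m h2]
    have hidx : ℓ - m + j < l.length := by omega
    rw [← List.getD_eq_getElem l 0 hidx]
    have := hval j hj
    rw [hieq] at this
    exact this
  conv_rhs => rw [← List.take_append_drop (ℓ - m) l]
  rw [hdrop]

lemma append_D_spec {m ℓ : ℕ} (hm : 2 ≤ m) (hℓ : m ≤ ℓ) {p : List ℕ}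
    (hP : ∀ x ∈ p, 1 ≤ x ∧ x ≤ m) (hA : Admissible m p) (hlen : p.length = ℓ - m) :
    (∀ x ∈ p ++ D m, 1 ≤ x ∧ x ≤ m) ∧ Admissible m (p ++ D m).dropLast ∧
      ¬ Admissible m (p ++ D m) ∧ (p ++ D m).length = ℓ := by
  have hlq : (p ++ D m).length = ℓ := by
    rw [List.length_append, hlen, length_D]; omega
  have hPq : ∀ x ∈ p ++ D m, 1 ≤ x ∧ x ≤ m := by
    intro x hx
    rcases List.mem_append.1 hx with h | h
    · exact hP x h
    · exact mem_D m h
  have hq : ∀ j', j' < m → (p ++ D m).getD (ℓ - m + j') 0 = m - j' := by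
    intro j' hj'
    have hidx : ℓ - m + j' < (p ++ D m).length := by omega
    rw [List.getD_eq_getElem _ 0 hidx,
      List.getElem_append_right (by omega : p.length ≤ ℓ - m + j')]
    have e : ℓ - m + j' - p.length = j' := by omega
    simp only [e]
    exact getElem_D m (by rw [length_D]; omega)
  have hbq : ∀ t, t < ℓ → (p ++ D m).getD t 0 ≤ m := by
    intro t ht
    have ht' : t < (p ++ D m).length := by omega
    rw [List.getD_eq_getElem _ 0 ht']
    exact (hPq _ (List.getElem_mem ht')).2
  refine ⟨hPq, ?_, ?_, hlq⟩
  · intro i hrun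
    have hrun' := run_of_prefix (List.dropLast_prefix _) hrun
    have hle : i + m ≤ ℓ - 1 := by
      have := hrun.1
      rw [List.length_dropLast, hlq] at this
      omega
    by_cases hc : i + m ≤ ℓ - m
    · exact hA i (run_to_prefix (List.prefix_append p (D m)) (by omega) hrun')
    · have hℓm : 1 ≤ ℓ - m := by omega
      set j := ℓ - m - 1 - i with hjdef
      have hj1 : j + 1 < m := by omega
      have hstep := hrun'.2 j hj1
      have e1 : i + j + 1 = ℓ - m + 0 := by omega
      have e2 : i + j = ℓ - m - 1 := by omega
      rw [e1, e2, hq 0 (by omega)] at hstep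
      have := hbq (ℓ - m - 1) (by omega)
      omega
  · intro hAdm
    refine hAdm (ℓ - m) ⟨by omega, fun j hj => ?_⟩
    have e1 : ℓ - m + j + 1 = ℓ - m + (j + 1) := by omega
    rw [e1, hq (j + 1) hj, hq j (by omega)]
    omega

section Equivs

variable {m ℓ : ℕ}

/-- appending a letter -/
def appendEquiv (hm : 2 ≤ m) (hℓ : m ≤ ℓ) :
    Alpha m × {l : List ℕ // (∀ x ∈ l, 1 ≤ x ∧ x ≤ m) ∧ Admissible m l ∧ l.length = ℓ - 1} ≃
    {l : List ℕ // (∀ x ∈ l, 1 ≤ x ∧ x ≤ m) ∧ Admissible m l.dropLast ∧ l.length = ℓ} where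
  toFun x := ⟨x.2.val ++ [x.1.val], by
    refine ⟨?_, ?_, ?_⟩
    · intro y hy
      rcases List.mem_append.1 hy with h | h
      · exact x.2.2.1 y h
      · rw [List.mem_singleton.1 h]; exact x.1.2
    · rw [List.dropLast_concat]; exact x.2.2.2.1
    · rw [List.length_append, x.2.2.2.2]; simp; omega⟩
  invFun l :=
    have hne : l.val ≠ [] := by
      intro h
      have := l.2.2.2
      rw [h] at this
      simp at this
      omega
    (⟨l.val.getLast hne, l.2.1 _ (List.getLast_mem hne)⟩,
     ⟨l.val.dropLast, fun x hx => l.2.1 x ((List.dropLast_sublist _).subset hx), l.2.2.1,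
      by rw [List.length_dropLast, l.2.2.2]⟩)
  left_inv x := by
    apply Prod.ext
    · apply Subtype.ext
      exact List.getLast_concat
    · apply Subtype.ext
      exact List.dropLast_concat
  right_inv l := Subtype.ext (List.dropLast_append_getLast _)

/-- taking/restoring the decreasing suffix on the bad lists -/
def badEquiv (hm : 2 ≤ m) (hℓ : m ≤ ℓ) :
    {l : List ℕ // (∀ x ∈ l, 1 ≤ x ∧ x ≤ m) ∧
        (Admissible m l.dropLast ∧ ¬ Admissible m l) ∧ l.length = ℓ} ≃
    {l : List ℕ // (∀ x ∈ l, 1 ≤ x ∧ x ≤ m) ∧ Admissible m l ∧ l.length = ℓ - m} where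
  toFun l := ⟨l.val.take (ℓ - m),
    fun x hx => l.2.1 x ((List.take_prefix _ _).subset hx),
    fun i hr => l.2.2.1.1 i (run_to_prefix (List.dropLast_prefix _)
      (by
        have h1 := hr.1
        rw [List.length_take, l.2.2.2] at h1
        rw [List.length_dropLast, l.2.2.2]
        omega)
      (run_of_prefix (List.take_prefix _ _) hr)),
    by rw [List.length_take, l.2.2.2]; omega⟩
  invFun p := ⟨p.val ++ D m, by
    obtain ⟨h1, h2, h3, h4⟩ := append_D_spec hm hℓ p.2.1 p.2.2.1 p.2.2.2
    exact ⟨h1, ⟨h2, h3⟩, h4⟩⟩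
  left_inv l := Subtype.ext (bad_eq hm hℓ l.2.1 l.2.2.1.1 l.2.2.1.2 l.2.2.2)
  right_inv p := Subtype.ext (List.take_left' p.2.2.2)

open Classical in
/-- splitting by admissibility -/
noncomputable def splitEquiv (m ℓ : ℕ) :
    {l : List ℕ // (∀ x ∈ l, 1 ≤ x ∧ x ≤ m) ∧ Admissible m l.dropLast ∧ l.length = ℓ} ≃
    {l : List ℕ // (∀ x ∈ l, 1 ≤ x ∧ x ≤ m) ∧ Admissible m l ∧ l.length = ℓ} ⊕
    {l : List ℕ // (∀ x ∈ l, 1 ≤ x ∧ x ≤ m) ∧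
        (Admissible m l.dropLast ∧ ¬ Admissible m l) ∧ l.length = ℓ} :=
  (Equiv.sumCompl (fun l : {l : List ℕ // (∀ x ∈ l, 1 ≤ x ∧ x ≤ m) ∧
      Admissible m l.dropLast ∧ l.length = ℓ} => Admissible m l.val)).symm.trans
    (Equiv.sumCongr
      ((Equiv.subtypeSubtypeEquivSubtypeInter _ _).trans (Equiv.subtypeEquivRight (fun l => by
        constructor
        · rintro ⟨⟨h1, h2, h3⟩, h4⟩
          exact ⟨h1, h4, h3⟩
        · rintro ⟨h1, h2, h3⟩
          exact ⟨⟨h1, admissible_of_prefix (List.dropLast_prefix _) h2, h3⟩, h2⟩)))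
      ((Equiv.subtypeSubtypeEquivSubtypeInter
          (fun l : List ℕ => (∀ x ∈ l, 1 ≤ x ∧ x ≤ m) ∧ Admissible m l.dropLast ∧ l.length = ℓ)
          (fun l => ¬ Admissible m l)).trans (Equiv.subtypeEquivRight (fun l => by
        tauto))))

end Equivs

lemma key_rec {m ℓ : ℕ} (hm : 2 ≤ m) (hℓ : m ≤ ℓ) :
    m * L m m (ℓ - 1) = L m m ℓ + L m m (ℓ - m) := by
  haveI i1 := finite_sub m (ℓ - 1) (Admissible m)
  haveI i2 := finite_sub m ℓ (Admissible m)
  haveI i3 := finite_sub m (ℓ - m) (Admissible m)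
  haveI i4 := finite_sub m ℓ (fun l => Admissible m l.dropLast)
  haveI i5 := finite_sub m ℓ (fun l => Admissible m l.dropLast ∧ ¬ Admissible m l)
  have h1 := Nat.card_congr (appendEquiv hm hℓ)
  rw [Nat.card_prod, card_alpha] at h1
  have h2 := Nat.card_congr (splitEquiv m ℓ)
  rw [Nat.card_sum] at h2
  have h3 := Nat.card_congr (badEquiv hm hℓ)
  show m * Nat.card _ = Nat.card _ + Nat.card _
  rw [h1, h2, h3]

end AdmAux

theorem admissible_count_recurrence (m : ℕ) (hm : 2 ≤ m) :
    (∀ ℓ, ℓ < m → L m m ℓ = m ^ ℓ) ∧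
    (∀ ℓ, m ≤ ℓ → (L m m ℓ : ℤ) = m * L m m (ℓ - 1) - L m m (ℓ - m)) := by
  constructor
  · intro ℓ hℓ
    have e : {l : List ℕ // (∀ x ∈ l, 1 ≤ x ∧ x ≤ m) ∧ Admissible m l ∧ l.length = ℓ} ≃
        {l : List ℕ // (∀ x ∈ l, 1 ≤ x ∧ x ≤ m) ∧ l.length = ℓ} :=
      Equiv.subtypeEquivRight (fun l => by
        constructor
        · rintro ⟨h1, _, h3⟩; exact ⟨h1, h3⟩
        · rintro ⟨h1, h3⟩
          refine ⟨h1, fun i hi => ?_, h3⟩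
          have := hi.1
          rw [h3] at this
          omega)
    rw [L, Nat.card_congr e, Nat.card_congr (AdmAux.listEquiv m ℓ), Nat.card_fun]
    simp [AdmAux.card_alpha]
  · intro ℓ hℓ
    have := AdmAux.key_rec hm hℓ
    omega
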